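/- Let G be a group with a normal subgroup H such that G/H is infinite cyclic. If H admits a topologically transitive action on ℝ by orientation-preserving homeomorphisms, then so does G. -/

import Mathlib

/-- An orientation-preserving action `φ : G →* (ℝ ≃o ℝ)` is topologically transitive if for
all nonempty open `U, V ⊆ ℝ` there is `g` with `φ g (U) ∩ V ≠ ∅`. -/
def IsTopTransitive {G : Type*} [Group G] (φ : G →* (ℝ ≃o ℝ)) : Prop :=
  ∀ U V : Set ℝ, IsOpen U → IsOpen V → U.Nonempty → V.Nonempty →
    ∃ g : G, ((φ g '' U) ∩ V).Nonempty

namespace Stmt10Aux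

open Set

noncomputable def g0 (r : ℝ) : ℝ := r / (1 + |r|)
noncomputable def g0inv (y : ℝ) : ℝ := y / (1 - |y|)

lemma one_add_abs_pos (r : ℝ) : 0 < 1 + |r| := by positivity

lemma abs_g0 (r : ℝ) : |g0 r| = |r| / (1 + |r|) := by
  rw [g0, abs_div, abs_of_pos (one_add_abs_pos r)]

lemma abs_g0_lt_one (r : ℝ) : |g0 r| < 1 := by
  rw [abs_g0, div_lt_one (one_add_abs_pos r)]
  linarith [abs_nonneg r]

lemma g0inv_g0 (r : ℝ) : g0inv (g0 r) = r := by
  have h := one_add_abs_pos r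
  rw [g0inv, abs_g0, g0, show 1 - |r| / (1 + |r|) = 1 / (1 + |r|) by field_simp; ring]
  field_simp

lemma g0_g0inv {y : ℝ} (hy : |y| < 1) : g0 (g0inv y) = y := by
  have h1 : 0 < 1 - |y| := by linarith
  have h2 : |g0inv y| = |y| / (1 - |y|) := by rw [g0inv, abs_div, abs_of_pos h1]
  rw [g0, h2, show 1 + |y| / (1 - |y|) = 1 / (1 - |y|) by field_simp; ring, g0inv]
  field_simp

lemma g0_strictMono : StrictMono g0 := by
  intro r s hrs
  rw [g0, g0, div_lt_div_iff₀ (one_add_abs_pos r) (one_add_abs_pos s)]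
  have key : r * |s| ≤ s * |r| := by
    rcases abs_cases r with ⟨hr, hr'⟩ | ⟨hr, hr'⟩ <;>
      rcases abs_cases s with ⟨hs, hs'⟩ | ⟨hs, hs'⟩ <;> nlinarith
  nlinarith

noncomputable def JJ (r : ℝ) : ℝ := (g0 r + 1) / 2
noncomputable def JJinv (y : ℝ) : ℝ := g0inv (2 * y - 1)

lemma JJ_mem (r : ℝ) : JJ r ∈ Ioo (0 : ℝ) 1 := by
  have h := abs_lt.mp (abs_g0_lt_one r)
  constructor <;> rw [JJ] <;> [linarith [h.1]; linarith [h.2]]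

lemma JJ_strictMono : StrictMono JJ := by
  intro a b h
  have := g0_strictMono h
  rw [JJ, JJ]; linarith

lemma JJinv_JJ (r : ℝ) : JJinv (JJ r) = r := by
  rw [JJinv, JJ, show 2 * ((g0 r + 1) / 2) - 1 = g0 r by ring, g0inv_g0]

lemma JJ_JJinv {y : ℝ} (hy : y ∈ Ioo (0 : ℝ) 1) : JJ (JJinv y) = y := by
  have h : |2 * y - 1| < 1 := abs_lt.mpr ⟨by linarith [hy.1], by linarith [hy.2]⟩
  rw [JJ, JJinv, g0_g0inv h]; ring

lemma JJ_continuous : Continuous JJ := by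
  have hg : Continuous g0 :=
    Continuous.div continuous_id (by continuity) fun x => (one_add_abs_pos x).ne'
  exact (hg.add continuous_const).div_const 2

/-- The glued map on `ℝ`. -/
noncomputable def Fmap {G : Type*} [Group G] (N : G → ℤ) (B : G → ℤ → ℝ → ℝ)
    (g : G) (x : ℝ) : ℝ :=
  ↑⌊x⌋ + ↑(N g) + B g ⌊x⌋ (Int.fract x)

lemma fract_mem (x : ℝ) : Int.fract x ∈ Ico (0 : ℝ) 1 :=
  ⟨Int.fract_nonneg x, Int.fract_lt_one x⟩

lemma floor_int_add_of_mem (m : ℤ) {r : ℝ} (hr : r ∈ Ico (0 : ℝ) 1) :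
    ⌊(m : ℝ) + r⌋ = m := by
  rw [Int.floor_intCast_add, Int.floor_eq_zero_iff.mpr hr, add_zero]

lemma fract_int_add_of_mem (m : ℤ) {r : ℝ} (hr : r ∈ Ico (0 : ℝ) 1) :
    Int.fract ((m : ℝ) + r) = r := by
  rw [Int.fract_intCast_add, Int.fract_eq_self.mpr ⟨hr.1, hr.2⟩]

section Abstract

variable {G : Type*} [Group G] (N : G → ℤ) (B : G → ℤ → ℝ → ℝ)
variable (hNmul : ∀ g₁ g₂, N (g₁ * g₂) = N g₁ + N g₂)
variable (hmem : ∀ g n x, x ∈ Ico (0 : ℝ) 1 → B g n x ∈ Ico (0 : ℝ) 1)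
variable (hmono : ∀ g n, StrictMonoOn (B g n) (Ico (0 : ℝ) 1))
variable (hcomp : ∀ g₁ g₂ n x, x ∈ Ico (0 : ℝ) 1 →
    B g₁ (n + N g₂) (B g₂ n x) = B (g₁ * g₂) n x)
variable (hone : ∀ n x, x ∈ Ico (0 : ℝ) 1 → B 1 n x = x)

include hmem in
lemma Fmap_eq (g : G) (x : ℝ) :
    Fmap N B g x = ((⌊x⌋ + N g : ℤ) : ℝ) + B g ⌊x⌋ (Int.fract x) := by
  rw [Fmap]; push_cast; ring

include hmem in
lemma Fmap_floor (g : G) (x : ℝ) : ⌊Fmap N B g x⌋ = ⌊x⌋ + N g := by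
  rw [Fmap_eq N B hmem, floor_int_add_of_mem _ (hmem g ⌊x⌋ _ (fract_mem x))]

include hmem in
lemma Fmap_fract (g : G) (x : ℝ) :
    Int.fract (Fmap N B g x) = B g ⌊x⌋ (Int.fract x) := by
  rw [Fmap_eq N B hmem, fract_int_add_of_mem _ (hmem g ⌊x⌋ _ (fract_mem x))]

include hNmul hmem hcomp in
lemma Fmap_mul (g₁ g₂ : G) (x : ℝ) :
    Fmap N B g₁ (Fmap N B g₂ x) = Fmap N B (g₁ * g₂) x := by
  rw [Fmap, Fmap_floor N B hmem, Fmap_fract N B hmem,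
    hcomp g₁ g₂ ⌊x⌋ _ (fract_mem x), Fmap, hNmul]
  push_cast; ring

include hNmul hone in
lemma Fmap_one (x : ℝ) : Fmap N B 1 x = x := by
  have hN1 : N (1 : G) = 0 := by have := hNmul 1 1; simpa using this
  rw [Fmap, hN1, hone _ _ (fract_mem x)]
  push_cast
  simpa using Int.floor_add_fract x

include hmem hmono in
lemma Fmap_strictMono (g : G) : StrictMono (Fmap N B g) := by
  intro x y hxy
  rcases eq_or_lt_of_le (Int.floor_mono hxy.le) with hf | hf
  · have hfr : Int.fract x < Int.fract y := by
      rw [Int.fract, Int.fract, hf]; linarith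
    have h2 := hmono g ⌊x⌋ (fract_mem x) (fract_mem y) hfr
    rw [hf] at h2
    rw [Fmap, Fmap, hf]; linarith
  · have h1 : (⌊x⌋ : ℝ) + 1 ≤ (⌊y⌋ : ℝ) := by exact_mod_cast hf
    have hx1 := (hmem g ⌊x⌋ _ (fract_mem x)).2
    have hy0 := (hmem g ⌊y⌋ _ (fract_mem y)).1
    rw [Fmap, Fmap]; linarith

include hNmul hmem hmono hcomp hone in
lemma exists_psi : ∃ Ψ : G →* (ℝ ≃o ℝ), ∀ g x, Ψ g x = Fmap N B g x := by
  have hsurj : ∀ g : G, Function.Surjective (Fmap N B g) := by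
    intro g x
    exact ⟨Fmap N B g⁻¹ x, by
      rw [Fmap_mul N B hNmul hmem hcomp, mul_inv_cancel, Fmap_one N B hNmul hone]⟩
  refine ⟨{
      toFun := fun g =>
        StrictMono.orderIsoOfSurjective (Fmap N B g)
          (Fmap_strictMono N B hmem hmono g) (hsurj g)
      map_one' := ?_
      map_mul' := ?_ }, fun g x => rfl⟩
  · ext x
    exact Fmap_one N B hNmul hone x
  · intro g₁ g₂
    ext x
    exact (Fmap_mul N B hNmul hmem hcomp g₁ g₂ x).symm

end Abstract

lemma exists_nonint (U : Set ℝ) (hU : IsOpen U) (hne : U.Nonempty) :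
    ∃ x ∈ U, Int.fract x ≠ 0 := by
  obtain ⟨x, hx⟩ := hne
  obtain ⟨ε, hε, hball⟩ := Metric.isOpen_iff.mp hU x hx
  by_cases h : Int.fract x = 0
  · set d : ℝ := min ε 1 / 2 with hd
    have hd0 : 0 < d := by positivity
    have hd1 : d < 1 := by
      have : min ε 1 ≤ 1 := min_le_right _ _
      rw [hd]; linarith
    have hdε : d < ε := by
      have : min ε 1 ≤ ε := min_le_left _ _
      rw [hd]; linarith [hd0]
    refine ⟨x + d, hball ?_, ?_⟩
    · rw [Metric.mem_ball, Real.dist_eq, show x + d - x = d by ring, abs_of_pos hd0]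
      exact hdε
    · have hxf : x = (⌊x⌋ : ℝ) := by
        have := Int.floor_add_fract x; rw [h] at this; linarith
      rw [hxf, Int.fract_intCast_add, Int.fract_eq_self.mpr ⟨hd0.le, hd1⟩]
      exact hd0.ne'
  · exact ⟨x, hx, h⟩

end Stmt10Aux

open Stmt10Aux Set in
/-- If `H ⊴ G` with `G/H` infinite cyclic and `H` admits a topologically transitive
orientation-preserving action on `ℝ`, then so does `G`. -/
theorem stmt_10 (G : Type*) [Group G] (H : Subgroup G) [H.Normal]
    (hcyc : Nonempty ((G ⧸ H) ≃* Multiplicative ℤ))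
    (hH : ∃ φ : H →* (ℝ ≃o ℝ), IsTopTransitive φ) :
    ∃ φ : G →* (ℝ ≃o ℝ), IsTopTransitive φ := by
  classical
  obtain ⟨φ, hφ⟩ := hH
  obtain ⟨e⟩ := hcyc
  set νh : G →* Multiplicative ℤ := e.toMonoidHom.comp (QuotientGroup.mk' H) with hνh
  set N : G → ℤ := fun g => Multiplicative.toAdd (νh g) with hN
  have hNmul : ∀ g₁ g₂ : G, N (g₁ * g₂) = N g₁ + N g₂ := by
    intro g₁ g₂; simp [hN, map_mul]
  have hNmem : ∀ g : G, g ∈ H → N g = 0 := by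
    intro g hg
    have h1 : νh g = 1 := by
      simp only [hνh, MonoidHom.comp_apply, MulEquiv.coe_toMonoidHom]
      rw [show QuotientGroup.mk' H g = 1 from (QuotientGroup.eq_one_iff g).mpr hg, map_one]
    simp [hN, h1]
  have hNmem0 : ∀ g : G, N g = 0 → g ∈ H := by
    intro g hg
    have h1 : νh g = 1 := by
      have : Multiplicative.toAdd (νh g) = Multiplicative.toAdd (1 : Multiplicative ℤ) := by
        simpa [hN] using hg
      exact Multiplicative.toAdd.injective this
    rw [hνh, MonoidHom.comp_apply, MulEquiv.coe_toMonoidHom, ← map_one e] at h1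
    exact (QuotientGroup.eq_one_iff g).mp (e.injective h1)
  obtain ⟨t, ht⟩ : ∃ t : G, νh t = Multiplicative.ofAdd 1 := by
    obtain ⟨q, hq⟩ := e.surjective (Multiplicative.ofAdd 1)
    obtain ⟨t, rfl⟩ := QuotientGroup.mk'_surjective H q
    exact ⟨t, by simpa [hνh] using hq⟩
  have hNt : ∀ n : ℤ, N (t ^ n) = n := by
    intro n
    have : νh (t ^ n) = Multiplicative.ofAdd n := by
      rw [map_zpow, ht, ← ofAdd_zsmul, smul_eq_mul, mul_one]
    simp [hN, this]
  have hcH : ∀ (g : G) (n : ℤ), t ^ (-(n + N g)) * g * t ^ n ∈ H := by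
    intro g n
    apply hNmem0
    rw [hNmul, hNmul, hNt, hNt]; ring
  set c : G → ℤ → H := fun g n => ⟨t ^ (-(n + N g)) * g * t ^ n, hcH g n⟩ with hc
  set B : G → ℤ → ℝ → ℝ :=
    fun g n x => if x = 0 then 0 else JJ (φ (c g n) (JJinv x)) with hB
  have hB0 : ∀ (g : G) (n : ℤ), B g n 0 = 0 := by intro g n; simp [hB]
  have hBne : ∀ (g : G) (n : ℤ) (x : ℝ), x ≠ 0 →
      B g n x = JJ (φ (c g n) (JJinv x)) := by
    intro g n x hx; simp [hB, hx]
  have hBmem : ∀ (g : G) (n : ℤ) (x : ℝ), x ∈ Ico (0:ℝ) 1 → B g n x ∈ Ico (0:ℝ) 1 := by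
    intro g n x hx
    by_cases h : x = 0
    · rw [h, hB0]; exact ⟨le_refl _, one_pos⟩
    · rw [hBne g n x h]
      exact ⟨(JJ_mem _).1.le, (JJ_mem _).2⟩
  have hIoo : ∀ x : ℝ, x ∈ Ico (0:ℝ) 1 → x ≠ 0 → x ∈ Ioo (0:ℝ) 1 :=
    fun x hx h => ⟨lt_of_le_of_ne hx.1 (Ne.symm h), hx.2⟩
  have hBmono : ∀ (g : G) (n : ℤ), StrictMonoOn (B g n) (Ico (0:ℝ) 1) := by
    intro g n x hx y hy hxy
    by_cases h : x = 0
    · have hy0 : y ≠ 0 := by rw [h] at hxy; exact hxy.ne'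
      rw [h, hB0, hBne g n y hy0]
      exact (JJ_mem _).1
    · have hxI := hIoo x hx h
      have hy0 : y ≠ 0 := (hxI.1.trans hxy).ne'
      have hyI := hIoo y hy hy0
      rw [hBne g n x h, hBne g n y hy0]
      have hinv : JJinv x < JJinv y :=
        JJ_strictMono.lt_iff_lt.mp (by rw [JJ_JJinv hxI, JJ_JJinv hyI]; exact hxy)
      exact JJ_strictMono ((φ (c g n)).strictMono hinv)
  have hBcomp : ∀ (g₁ g₂ : G) (n : ℤ) (x : ℝ), x ∈ Ico (0:ℝ) 1 →
      B g₁ (n + N g₂) (B g₂ n x) = B (g₁ * g₂) n x := by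
    intro g₁ g₂ n x hx
    by_cases h : x = 0
    · rw [h, hB0, hB0, hB0]
    · have hcc : c g₁ (n + N g₂) * c g₂ n = c (g₁ * g₂) n := by
        apply Subtype.ext
        show (t ^ (-(n + N g₂ + N g₁)) * g₁ * t ^ (n + N g₂)) *
            (t ^ (-(n + N g₂)) * g₂ * t ^ n) =
          t ^ (-(n + N (g₁ * g₂))) * (g₁ * g₂) * t ^ n
        rw [hNmul]
        group
      rw [hBne g₂ n x h, hBne g₁ _ _ (JJ_mem _).1.ne', JJinv_JJ,
        hBne (g₁ * g₂) n x h, ← hcc, map_mul]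
      rfl
  have hBone : ∀ (n : ℤ) (x : ℝ), x ∈ Ico (0:ℝ) 1 → B 1 n x = x := by
    intro n x hx
    by_cases h : x = 0
    · rw [h, hB0]
    · have hc1 : c (1 : G) n = 1 := by
        apply Subtype.ext
        show t ^ (-(n + N 1)) * 1 * t ^ n = 1
        have hN1 : N (1 : G) = 0 := hNmem 1 (one_mem H)
        rw [hN1]
        group
      rw [hBne 1 n x h, hc1, map_one]
      show JJ (JJinv x) = x
      exact JJ_JJinv (hIoo x hx h)
  obtain ⟨Ψ, hΨ⟩ := exists_psi N B hNmul hBmem hBmono hBcomp hBone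
  refine ⟨Ψ, ?_⟩
  intro U V hUo hVo hUne hVne
  obtain ⟨x₀, hx₀U, hx₀f⟩ := exists_nonint U hUo hUne
  obtain ⟨y₀, hy₀V, hy₀f⟩ := exists_nonint V hVo hVne
  set k : ℤ := ⌊x₀⌋ with hk
  set m : ℤ := ⌊y₀⌋ with hm
  set A : Set ℝ := (fun r => (k : ℝ) + JJ r) ⁻¹' U with hA
  set Bs : Set ℝ := (fun r => (m : ℝ) + JJ r) ⁻¹' V with hBs
  have hAo : IsOpen A := hUo.preimage (continuous_const.add JJ_continuous)
  have hBso : IsOpen Bs := hVo.preimage (continuous_const.add JJ_continuous)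
  have hfx₀ : Int.fract x₀ ∈ Ioo (0:ℝ) 1 :=
    ⟨lt_of_le_of_ne (Int.fract_nonneg _) (Ne.symm hx₀f), Int.fract_lt_one _⟩
  have hfy₀ : Int.fract y₀ ∈ Ioo (0:ℝ) 1 :=
    ⟨lt_of_le_of_ne (Int.fract_nonneg _) (Ne.symm hy₀f), Int.fract_lt_one _⟩
  have hAne : A.Nonempty := by
    refine ⟨JJinv (Int.fract x₀), ?_⟩
    show (k : ℝ) + JJ (JJinv (Int.fract x₀)) ∈ U
    rw [JJ_JJinv hfx₀, hk, Int.floor_add_fract]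
    exact hx₀U
  have hBsne : Bs.Nonempty := by
    refine ⟨JJinv (Int.fract y₀), ?_⟩
    show (m : ℝ) + JJ (JJinv (Int.fract y₀)) ∈ V
    rw [JJ_JJinv hfy₀, hm, Int.floor_add_fract]
    exact hy₀V
  obtain ⟨h₀, z, ⟨r, hrA, rfl⟩, hzB⟩ := hφ A Bs hAo hBso hAne hBsne
  set g : G := t ^ m * (h₀ : G) * t ^ (-k) with hg
  have hNg : N g = m - k := by
    rw [hg, hNmul, hNmul, hNt, hNt, hNmem _ h₀.2]; ring
  set x : ℝ := (k : ℝ) + JJ r with hx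
  have hxU : x ∈ U := hrA
  have hJrm : JJ r ∈ Ico (0:ℝ) 1 := ⟨(JJ_mem r).1.le, (JJ_mem r).2⟩
  have hfl : ⌊x⌋ = k := floor_int_add_of_mem k hJrm
  have hfr : Int.fract x = JJ r := fract_int_add_of_mem k hJrm
  have hcgk : c g k = h₀ := by
    apply Subtype.ext
    show t ^ (-(k + N g)) * g * t ^ k = (h₀ : G)
    rw [hNg, hg]
    group
  have hval : Ψ g x = (m : ℝ) + JJ (φ h₀ r) := by
    rw [hΨ, Fmap, hfl, hfr, hBne g k _ (JJ_mem r).1.ne', JJinv_JJ, hcgk, hNg]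
    push_cast; ring
  exact ⟨g, Ψ g x, mem_image_of_mem _ hxU, hval ▸ hzB⟩
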